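/- Let k > 0, ν > −k, and c ∈ ℝ. Then for all x > 0, d/dx ( x^{−ν/k} W^k_{ν,c}(x) ) = −c · x^{−ν/k} W^k_{ν+k,c}(x). -/

import Mathlib

open Real

/-- The k-gamma function, `Γ_k(x) = k^(x/k - 1) * Γ(x/k)`. -/
noncomputable def kGamma (k x : ℝ) : ℝ := k ^ (x / k - 1) * Real.Gamma (x / k)

/-- The generalized k-Bessel function `W^k_{ν,c}(x)`. -/
noncomputable def kBesselW (k ν c x : ℝ) : ℝ :=
  ∑' r : ℕ, (-c) ^ r / (kGamma k (r * k + ν + k) * (r.factorial : ℝ)) *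
    (x / 2) ^ (2 * (r : ℝ) + ν / k)

lemma kGamma_eq' (k ν : ℝ) (hk : 0 < k) (n : ℕ) :
    kGamma k (n*k+ν+k) = k ^ ((n:ℝ) + ν/k) * Real.Gamma ((n:ℝ) + ν/k + 1) := by
  unfold kGamma
  have h : ((n:ℝ)*k+ν+k)/k = (n:ℝ) + ν/k + 1 := by field_simp
  rw [h, show (n:ℝ) + ν/k + 1 - 1 = (n:ℝ) + ν/k by ring]

lemma kGamma_pos (k ν : ℝ) (hk : 0 < k) (hν : -k < ν) (n : ℕ) : 0 < kGamma k (n*k+ν+k) := by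
  rw [kGamma_eq' k ν hk n]
  have h1 : -1 < ν / k := by rw [lt_div_iff₀ hk]; linarith
  have h2 : (0:ℝ) ≤ n := Nat.cast_nonneg n
  exact mul_pos (Real.rpow_pos_of_pos hk _) (Real.Gamma_pos_of_pos (by linarith))

lemma summable_u (k ν c x : ℝ) (hk : 0 < k) (hν : -k < ν) (hx : 0 < x) :
    Summable (fun r : ℕ =>
      |(-c)^r / (kGamma k (r*k+ν+k) * (r.factorial : ℝ)) * (2:ℝ) ^ (-(2*(r:ℝ)+ν/k))|
        * (2*r) * (x+1)^(2*r-1)) := by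
  set a := ν / k with ha
  have ha1 : -1 < a := by rw [ha, lt_div_iff₀ hk]; linarith
  set L : ℝ := (2:ℝ)^(-a) * (k^a)⁻¹ / (x+1) with hL
  set E : ℝ := |c| * (x+1)^2 / (2*k) with hE
  rw [← summable_nat_add_iff 2]
  have hsum : Summable (fun n : ℕ => L * (E^(n+2)/((n+2).factorial : ℝ))) :=
    ((summable_nat_add_iff 2).mpr (Real.summable_pow_div_factorial E)).mul_left L
  refine hsum.of_nonneg_of_le (fun n => by positivity) (fun n => ?_)
  set r : ℕ := n + 2 with hr
  have hr2 : 2 ≤ r := by omega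
  have hGpos : 0 < Real.Gamma ((r:ℝ) + a + 1) :=
    Real.Gamma_pos_of_pos (by have := Nat.cast_nonneg (α := ℝ) r; linarith)
  have hkG : kGamma k (r*k+ν+k) = k ^ ((r:ℝ) + a) * Real.Gamma ((r:ℝ) + a + 1) :=
    kGamma_eq' k ν hk r
  have hkGpos : 0 < kGamma k (r*k+ν+k) := by
    rw [hkG]; exact mul_pos (Real.rpow_pos_of_pos hk _) hGpos
  have hfac : (0:ℝ) < r.factorial := by exact_mod_cast r.factorial_pos
  have hC : |(-c)^r / (kGamma k (r*k+ν+k) * (r.factorial : ℝ)) * (2:ℝ) ^ (-(2*(r:ℝ)+a))|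
      = |c|^r * (2:ℝ) ^ (-(2*(r:ℝ)+a)) / (k ^ ((r:ℝ) + a) * Real.Gamma ((r:ℝ) + a + 1)
          * (r.factorial : ℝ)) := by
    rw [abs_mul, abs_div, abs_pow, abs_neg,
      abs_of_pos (mul_pos hkGpos hfac),
      abs_of_pos (Real.rpow_pos_of_pos (by norm_num) _), hkG]
    ring
  rw [hC]
  -- Gamma ≥ 1
  have hG1 : 1 ≤ Real.Gamma ((r:ℝ) + a + 1) := by
    have h2r : (2:ℝ) ≤ (r:ℝ) := by exact_mod_cast hr2
    have : Real.Gamma 2 ≤ Real.Gamma ((r:ℝ) + a + 1) := by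
      rcases eq_or_lt_of_le (show (2:ℝ) ≤ (r:ℝ) + a + 1 by linarith) with h | h
      · rw [← h]
      · exact (Real.Gamma_strictMonoOn_Ici (by norm_num)
          (by simp only [Set.mem_Ici]; linarith) h).le
    rwa [Real.Gamma_two] at this
  -- 2r ≤ 2^r
  have h2r : (2 * r : ℝ) ≤ (2:ℝ)^r := by
    have h1 : n + 1 ≤ 2^n := Nat.lt_two_pow_self
    have : 2 * r ≤ 2^r := by
      rw [hr]
      calc 2*(n+2) ≤ 4*(n+1) := by omega
        _ ≤ 4*2^n := Nat.mul_le_mul_left 4 h1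
        _ = 2^(n+2) := by ring
    exact_mod_cast this
  -- main chain
  have hstep1 : |c|^r * (2:ℝ) ^ (-(2*(r:ℝ)+a)) / (k ^ ((r:ℝ) + a) * Real.Gamma ((r:ℝ) + a + 1)
          * (r.factorial : ℝ)) * (2*(r:ℝ)) * (x+1)^(2*r-1)
      ≤ |c|^r * (2:ℝ) ^ (-(2*(r:ℝ)+a)) * (2:ℝ)^r * (x+1)^(2*r-1)
          / (k ^ ((r:ℝ) + a) * (r.factorial : ℝ)) := by
    rw [div_mul_eq_mul_div, div_mul_eq_mul_div]
    apply div_le_div₀ (by positivity) ?_ (by positivity) ?_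
    · have h0 : (0:ℝ) ≤ |c|^r * (2:ℝ) ^ (-(2*(r:ℝ)+a)) * (x+1)^(2*r-1) := by positivity
      calc |c|^r * (2:ℝ) ^ (-(2*(r:ℝ)+a)) * (2*(r:ℝ)) * (x+1)^(2*r-1)
          = |c|^r * (2:ℝ) ^ (-(2*(r:ℝ)+a)) * (x+1)^(2*r-1) * (2*(r:ℝ)) := by ring
        _ ≤ |c|^r * (2:ℝ) ^ (-(2*(r:ℝ)+a)) * (x+1)^(2*r-1) * (2:ℝ)^r :=
            mul_le_mul_of_nonneg_left h2r h0
        _ = |c|^r * (2:ℝ) ^ (-(2*(r:ℝ)+a)) * (2:ℝ)^r * (x+1)^(2*r-1) := by ring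
    · nlinarith [mul_nonneg (mul_pos (Real.rpow_pos_of_pos hk ((r:ℝ)+a)) hfac).le
        (sub_nonneg.mpr hG1)]
  refine hstep1.trans (le_of_eq ?_)
  -- equality step
  have e1 : (2:ℝ) ^ (-(2*(r:ℝ)+a)) = (2:ℝ)^(-a) / ((2:ℝ)^r * (2:ℝ)^r) := by
    rw [eq_div_iff (by positivity), ← mul_assoc, ← Real.rpow_natCast 2 r,
      ← Real.rpow_add (by norm_num : (0:ℝ) < 2), ← Real.rpow_add (by norm_num : (0:ℝ) < 2)]
    congr 1
    push_cast
    try ring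
  have e2 : k ^ ((r:ℝ) + a) = k^r * k^a := by
    rw [Real.rpow_add hk, Real.rpow_natCast]
  have e3 : (x+1)^(2*r-1) = (x+1)^(2*r) / (x+1) := by
    rw [eq_div_iff (by positivity)]
    rw [← pow_succ]
    congr 1 <;> omega
  rw [e1, e2, e3, hL, hE, div_pow, mul_pow, mul_pow, ← pow_mul]
  have hka : (0:ℝ) < k^a := Real.rpow_pos_of_pos hk a
  have h4r : (0:ℝ) < (4:ℝ)^r := by positivity
  have h2rp : (0:ℝ) < (2:ℝ)^r := by positivity
  have hkr : (0:ℝ) < k^r := by positivity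
  field_simp

lemma besselW_rewrite (k ν c : ℝ) (y : ℝ) (hy : 0 < y) :
    y ^ (-(ν/k)) * kBesselW k ν c y =
      ∑' r : ℕ, ((-c)^r / (kGamma k (r*k+ν+k) * (r.factorial : ℝ)) *
        (2:ℝ) ^ (-(2*(r:ℝ)+ν/k))) * y ^ (2*r) := by
  unfold kBesselW
  rw [← tsum_mul_left]
  refine tsum_congr fun r => ?_
  have h2 : (y/2 : ℝ) ^ (2*(r:ℝ)+ν/k)
      = y ^ (2*r) * y ^ (ν/k) * (2:ℝ) ^ (-(2*(r:ℝ)+ν/k)) := by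
    rw [Real.div_rpow hy.le (by norm_num : (0:ℝ) ≤ 2), Real.rpow_neg (by norm_num : (0:ℝ) ≤ 2),
      div_eq_mul_inv]
    congr 1
    rw [← Real.rpow_natCast y (2*r), ← Real.rpow_add hy]
    congr 1
    push_cast; ring
  have h3 : y ^ (-(ν/k)) * y ^ (ν/k) = 1 := by
    rw [← Real.rpow_add hy]; simp
  rw [h2]
  linear_combination ((-c)^r / (kGamma k (r*k+ν+k) * (r.factorial : ℝ)) *
    (2:ℝ) ^ (-(2*(r:ℝ)+ν/k)) * y ^ (2*r)) * h3

theorem kBessel_deriv_mul_rpow_neg (k ν c : ℝ) (hk : 0 < k) (hν : -k < ν) (x : ℝ)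
    (hx : 0 < x) :
    deriv (fun y : ℝ => y ^ (-(ν / k)) * kBesselW k ν c y) x =
      -c * x ^ (-(ν / k)) * kBesselW k (ν + k) c x := by
  set a := ν / k with ha
  set C : ℕ → ℝ := fun r => (-c)^r / (kGamma k (r*k+ν+k) * (r.factorial : ℝ))
      * (2:ℝ) ^ (-(2*(r:ℝ)+a)) with hCdef
  have hu : Summable (fun r : ℕ => |C r| * (2*r) * (x+1)^(2*r-1)) :=
    summable_u k ν c x hk hν hx
  have hxmem : x ∈ Set.Ioo (-(x+1)) (x+1) := ⟨by linarith, by linarith⟩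
  have hbound : ∀ (r : ℕ) (y : ℝ), y ∈ Set.Ioo (-(x+1)) (x+1) →
      ‖C r * ((2*r : ℕ) * y^(2*r-1))‖ ≤ |C r| * (2*r) * (x+1)^(2*r-1) := by
    intro r y hy
    have hyb : |y| ≤ x+1 := by
      rw [abs_le]; exact ⟨by linarith [hy.1], by linarith [hy.2]⟩
    calc ‖C r * ((2*r : ℕ) * y^(2*r-1))‖
        = |C r| * ((2*(r:ℝ)) * |y|^(2*r-1)) := by
          rw [Real.norm_eq_abs, abs_mul (C r)]
          congr 1
          rw [abs_mul, abs_pow, Nat.abs_cast]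
          push_cast; ring
      _ ≤ |C r| * ((2*(r:ℝ)) * (x+1)^(2*r-1)) := by
          gcongr
      _ = |C r| * (2*r) * (x+1)^(2*r-1) := by ring
  have hg0 : Summable (fun r : ℕ => C r * (0:ℝ)^(2*r)) := by
    apply summable_of_ne_finset_zero (s := {0})
    intro r hr
    simp only [Finset.mem_singleton] at hr
    rw [zero_pow (by omega), mul_zero]
  have hder : HasDerivAt (fun y : ℝ => ∑' r : ℕ, C r * y^(2*r))
      (∑' r : ℕ, C r * ((2*r : ℕ) * x^(2*r-1))) x := by
    refine hasDerivAt_tsum_of_isPreconnected hu isOpen_Ioo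
      (convex_Ioo _ _).isPreconnected
      (fun r y _ => (hasDerivAt_pow (2*r) y).const_mul (C r))
      hbound ?_ hg0 hxmem
    exact ⟨by linarith, by linarith⟩
  have heq : (fun y : ℝ => y ^ (-a) * kBesselW k ν c y)
      =ᶠ[nhds x] (fun y : ℝ => ∑' r : ℕ, C r * y^(2*r)) := by
    filter_upwards [Ioi_mem_nhds hx] with y hy
    exact besselW_rewrite k ν c y hy
  rw [heq.deriv_eq, hder.deriv]
  have hsumder : Summable (fun r : ℕ => C r * ((2*r : ℕ) * x^(2*r-1))) :=
    hu.of_norm_bounded (fun r => hbound r x hxmem)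
  rw [hsumder.tsum_eq_zero_add]
  have h0 : C 0 * ((2*0 : ℕ) * x^(2*0-1)) = 0 := by norm_num
  rw [h0, zero_add]
  unfold kBesselW
  rw [← tsum_mul_left]
  refine tsum_congr fun s => ?_
  -- notation
  have hGeq : kGamma k (((s+1 : ℕ) : ℝ)*k+ν+k) = kGamma k ((s:ℝ)*k+(ν+k)+k) := by
    congr 1; push_cast; ring
  have hGpos : 0 < kGamma k ((s:ℝ)*k+(ν+k)+k) :=
    kGamma_pos k (ν+k) hk (by linarith) s
  have hfacpos : (0:ℝ) < (s.factorial : ℝ) := by exact_mod_cast s.factorial_pos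
  -- exponent rewriting
  have hp : 2*(s:ℝ)+(ν+k)/k = ((2*s+1 : ℕ) : ℝ) + a := by
    rw [ha]; push_cast; field_simp; ring
  have hdec2 : x ^ (-a) * (x/2 : ℝ) ^ (2*(s:ℝ)+(ν+k)/k)
      = x^(2*s+1) * (2:ℝ) ^ (-(((2*s+1 : ℕ) : ℝ) + a)) := by
    rw [hp, Real.div_rpow hx.le (by norm_num : (0:ℝ) ≤ 2),
      Real.rpow_neg (by norm_num : (0:ℝ) ≤ 2)]
    rw [div_eq_mul_inv, ← mul_assoc, ← Real.rpow_add hx,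
      show -a + (((2*s+1 : ℕ) : ℝ) + a) = ((2*s+1 : ℕ) : ℝ) by ring,
      Real.rpow_natCast]
  have hpow2 : (2:ℝ) ^ (-(2*(((s+1) : ℕ) : ℝ)+a)) * 2 = (2:ℝ) ^ (-(((2*s+1 : ℕ) : ℝ) + a)) := by
    have h := Real.rpow_add (show (0:ℝ) < 2 by norm_num) (-(2*(((s+1) : ℕ) : ℝ)+a)) 1
    rw [Real.rpow_one] at h
    rw [← h]
    congr 1
    push_cast; ring
  have hfact : ((s+1).factorial : ℝ) = ((s:ℝ)+1) * (s.factorial : ℝ) := by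
    rw [Nat.factorial_succ]; push_cast; ring
  have hxpow : x^(2*(s+1)-1) = x^(2*s+1) := by congr 1 <;> omega
  -- assemble
  rw [hCdef]
  simp only []
  rw [hGeq, hfact, hxpow]
  have hrw : -c * x ^ (-a) * ((-c)^s / (kGamma k ((s:ℝ)*k+(ν+k)+k) * (s.factorial : ℝ)) *
      (x/2) ^ (2*(s:ℝ)+(ν+k)/k))
      = -c * ((-c)^s / (kGamma k ((s:ℝ)*k+(ν+k)+k) * (s.factorial : ℝ)) *
        (x^(2*s+1) * (2:ℝ) ^ (-(((2*s+1 : ℕ) : ℝ) + a)))) := by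
    rw [← hdec2]; ring
  rw [hrw, ← hpow2]
  have hcast : ((2*(s+1) : ℕ) : ℝ) = 2*((s:ℝ)+1) := by push_cast; ring
  rw [hcast]
  rw [pow_succ]
  have hs1 : ((s:ℝ)+1) ≠ 0 := by positivity
  field_simp
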